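/- (Strong law for the storage volume, finite capacity.) Assume p_0 > 0 and p_0 + p_1 < 1, and let π be the unique stationary probability distribution of the transition matrix P. Then, for any distribution of the initial level Z_0, almost surely (1/(n+1)) ∑_{k=0}^{n} Z_k → μ_z as n → ∞, where μ_z = ∑_{i=0}^{C−1} i · π_i. -/

import Mathlib

open scoped BigOperators
open MeasureTheory ProbabilityTheory Filter

/-- Transition matrix of the finite-capacity Moran storage chain on states `{0, …, C-1}`:
`P 0 0 = p 0 + p 1`, `P 0 j = p (j+1)` for `1 ≤ j ≤ C-2`, `P i j = p (j-i+1)` for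
`1 ≤ i ≤ C-1` and `i-1 ≤ j ≤ C-2`, `P i j = 0` for `j < i-1`, and
`P i (C-1) = h (C-i)` where `h k = ∑_{j ≥ k} p j`. -/
noncomputable def moranP (C : ℕ) (p : ℕ → ℝ) : Matrix (Fin C) (Fin C) ℝ :=
  Matrix.of fun i j =>
    if (j : ℕ) = C - 1 then ∑' k : ℕ, p (C - (i : ℕ) + k)
    else if (i : ℕ) = 0 ∧ (j : ℕ) = 0 then p 0 + p 1
    else if (i : ℕ) ≤ (j : ℕ) + 1 then p ((j : ℕ) + 1 - (i : ℕ))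
    else 0

section aux
variable {Ω : Type} [MeasurableSpace Ω] (μ : Measure Ω) [IsProbabilityMeasure μ]

lemma meas_ge_eq (W : Ω → ℕ) (hW : Measurable W) (m : ℕ) :
    μ {ω | m ≤ W ω} = ∑' k : ℕ, μ {ω | W ω = m + k} := by
  have h1 : {ω | m ≤ W ω} = ⋃ k : ℕ, W ⁻¹' {m + k} := by
    ext ω
    simp only [Set.mem_setOf_eq, Set.mem_iUnion, Set.mem_preimage, Set.mem_singleton_iff]
    constructor
    · intro h; exact ⟨W ω - m, by omega⟩
    · rintro ⟨k, hk⟩; omega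
  rw [h1, measure_iUnion]
  · rfl
  · intro k l hkl
    simp only [Function.onFun, Set.disjoint_left, Set.mem_preimage, Set.mem_singleton_iff]
    intro ω h1 h2; omega
  · intro k; exact hW (measurableSet_singleton _)

lemma law_phi {C : ℕ} (hC : 2 ≤ C) (p : ℕ → ℝ) (W : Ω → ℕ) (hW : Measurable W)
    (hWdist : ∀ j, (μ {ω | W ω = j}).toReal = p j) (z w : ℕ) (hz : z < C) (hw : w < C) :
    (μ {ω | min (z + W ω - 1) (C - 1) = w}).toReal
      = moranP C p ⟨z, hz⟩ ⟨w, hw⟩ := by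
  simp only [moranP, Matrix.of_apply]
  by_cases hwC : w = C - 1
  · rw [if_pos hwC]
    have hset : {ω | min (z + W ω - 1) (C - 1) = w} = {ω | C - z ≤ W ω} := by
      ext ω; simp only [Set.mem_setOf_eq]; omega
    rw [hset, meas_ge_eq μ W hW]
    rw [ENNReal.tsum_toReal_eq (fun k => measure_ne_top μ _)]
    exact tsum_congr fun k => hWdist _
  · rw [if_neg hwC]
    by_cases h00 : z = 0 ∧ w = 0
    · rw [if_pos h00]
      obtain ⟨hz0, hw0⟩ := h00
      have hset : {ω | min (z + W ω - 1) (C - 1) = w}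
          = {ω | W ω = 0} ∪ {ω | W ω = 1} := by
        ext ω; simp only [Set.mem_setOf_eq, Set.mem_union]; omega
      rw [hset, measure_union _ (show MeasurableSet {ω | W ω = 1} from hW (measurableSet_singleton 1))]
      · rw [ENNReal.toReal_add (measure_ne_top μ _) (measure_ne_top μ _),
          hWdist 0, hWdist 1]
      · simp only [Set.disjoint_left, Set.mem_setOf_eq]; intro ω h1 h2; omega
    · rw [if_neg h00]
      by_cases hle : z ≤ w + 1
      · rw [if_pos hle]
        have hset : {ω | min (z + W ω - 1) (C - 1) = w} = {ω | W ω = w + 1 - z} := by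
          ext ω; simp only [Set.mem_setOf_eq]; omega
        rw [hset, hWdist]
      · rw [if_neg hle]
        have hset : {ω | min (z + W ω - 1) (C - 1) = w} = (∅ : Set Ω) := by
          ext ω; simp only [Set.mem_setOf_eq, Set.mem_empty_iff_false, iff_false]; omega
        rw [hset, measure_empty]; simp

end aux
/-- The deterministic storage recursion driven by a sequence of inputs. -/
def mchain (C z0 : ℕ) (y : ℕ → ℕ) : ℕ → ℕ
  | 0 => z0
  | k + 1 => min (mchain C z0 y k + y k - 1) (C - 1)

lemma mchain_congr (C z0 : ℕ) (y y' : ℕ → ℕ) (k : ℕ) (h : ∀ j < k, y j = y' j) :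
    mchain C z0 y k = mchain C z0 y' k := by
  induction k with
  | zero => rfl
  | succ k ih =>
    have h1 : mchain C z0 y k = mchain C z0 y' k := ih fun j hj => h j (by omega)
    simp only [mchain, h1, h k (by omega)]

/-- Bounded extension of a vector on `Fin C` to `ℕ`. -/
noncomputable def Ffun (C : ℕ) (f : Fin C → ℝ) : ℕ → ℝ :=
  fun m => if h : m < C then f ⟨m, h⟩ else 0

/-- The function `P f` extended to `ℕ`. -/
noncomputable def PFfun (C : ℕ) (P : Matrix (Fin C) (Fin C) ℝ) (f : Fin C → ℝ) : ℕ → ℝ :=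
  fun m => if h : m < C then ∑ j, P ⟨m, h⟩ j * f j else 0
lemma poisson_exists {C : ℕ} (hC : 2 ≤ C) (P : Matrix (Fin C) (Fin C) ℝ)
    (hnn : ∀ i j, 0 ≤ P i j) (hrow : ∀ i, ∑ j, P i j = 1)
    {ε : ℝ} (hε : 0 < ε)
    (hεle : ∀ i : Fin C, ε ≤ P i ⟨(i : ℕ) - 1, by have := i.isLt; omega⟩)
    (π : Fin C → ℝ) (hπ1 : ∑ i, π i = 1) (hπP : Matrix.vecMul π P = π)
    (g : Fin C → ℝ) (hg : dotProduct π g = 0) :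
    ∃ f : Fin C → ℝ, ∀ i, g i = f i - ∑ j, P i j * f j := by
  have hC0 : 0 < C := by omega
  set z0 : Fin C := ⟨0, hC0⟩ with hz0
  -- powers are stochastic
  have hQnn : ∀ n, ∀ i j, 0 ≤ (P ^ n) i j := by
    intro n
    induction n with
    | zero => intro i j; by_cases h : i = j <;> simp [Matrix.one_apply, h]
    | succ n ih =>
      intro i j
      rw [pow_succ, Matrix.mul_apply]
      exact Finset.sum_nonneg fun k _ => mul_nonneg (ih i k) (hnn k j)
  have hQrow : ∀ n, ∀ i, ∑ j, (P ^ n) i j = 1 := by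
    intro n
    induction n with
    | zero => intro i; simp [Matrix.one_apply]
    | succ n ih =>
      intro i
      simp only [pow_succ, Matrix.mul_apply]
      rw [Finset.sum_comm]
      calc ∑ k, ∑ j, (P ^ n) i k * P k j = ∑ k, (P ^ n) i k * ∑ j, P k j := by
            simp [Finset.mul_sum]
        _ = 1 := by simp [hrow, ih i]
  -- Doeblin bound
  have hQ0 : ∀ n, ∀ i : Fin C, (i : ℕ) ≤ n → ε ^ n ≤ (P ^ n) i z0 := by
    intro n
    induction n with
    | zero =>
      intro i hi
      have : i = z0 := by apply Fin.ext; simpa using hi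
      subst this; simp [Matrix.one_apply]
    | succ n ih =>
      intro i hi
      have hi' : ((⟨(i : ℕ) - 1, by have := i.isLt; omega⟩ : Fin C) : ℕ) ≤ n := by
        simp; omega
      have h1 : ε ^ n ≤ (P ^ n) ⟨(i : ℕ) - 1, by have := i.isLt; omega⟩ z0 := ih _ hi'
      rw [show (P ^ (n + 1) : Matrix (Fin C) (Fin C) ℝ) = P * P ^ n from pow_succ' P n]
      have h2 : P i ⟨(i : ℕ) - 1, by have := i.isLt; omega⟩ *
          (P ^ n) ⟨(i : ℕ) - 1, by have := i.isLt; omega⟩ z0 ≤ (P * P ^ n) i z0 := by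
        rw [Matrix.mul_apply]
        exact Finset.single_le_sum
          (fun k _ => mul_nonneg (hnn i k) (hQnn n k z0)) (Finset.mem_univ _)
      refine le_trans ?_ h2
      rw [pow_succ']
      exact mul_le_mul (hεle i) h1 (pow_nonneg hε.le n) ((hε.le).trans (hεle i))
  -- kernel of 1 - P is the constants
  have hker : ∀ v : Fin C → ℝ, P.mulVec v = v → ∀ i, v i = v z0 := by
    intro v hv
    set m := C - 1 with hm
    have hQv : (P ^ m).mulVec v = v := by
      clear hQ0
      induction m with
      | zero => simp [Matrix.one_mulVec]
      | succ n ih => rw [pow_succ, ← Matrix.mulVec_mulVec, hv, ih]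
    set Q := P ^ m with hQ
    set δ := ε ^ m with hδ
    have hδ0 : 0 < δ := pow_pos hε m
    have hQd : ∀ i : Fin C, δ ≤ Q i z0 := fun i => hQ0 m i (by have := i.isLt; omega)
    have main : ∀ (u : Fin C → ℝ), ((Q.mulVec u = u) → ∀ i0, (∀ j, u j ≤ u i0) → u i0 ≤ u z0) := by
      intro u hu i0 hmax
      have he : ∀ i, u i = ∑ j, Q i j * u j := by
        intro i
        conv_lhs => rw [← hu]
        simp [Matrix.mulVec, dotProduct]
      set d : Fin C → ℝ := fun j => if j = z0 then δ else 0 with hd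
      have hsub : ∀ j, 0 ≤ Q i0 j - d j := by
        intro j
        by_cases h : j = z0
        · subst h; simp [d]; linarith [hQd i0]
        · simp [d, h]; exact (hQnn m i0 j)
      have e1 : ∑ j, (Q i0 j - d j) * u j = (∑ j, Q i0 j * u j) - δ * u z0 := by
        simp only [sub_mul, Finset.sum_sub_distrib]
        congr 1
        simp [d, ite_mul, Finset.sum_ite_eq']
      have e2 : ∑ j, (Q i0 j - d j) = 1 - δ := by
        simp only [Finset.sum_sub_distrib, hQrow m i0]
        congr 1
        all_goals simp [d, Finset.sum_ite_eq', hQ, hQrow m i0]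
      have e3 : ∑ j, (Q i0 j - d j) * u j ≤ ∑ j, (Q i0 j - d j) * u i0 :=
        Finset.sum_le_sum fun j _ => mul_le_mul_of_nonneg_left (hmax j) (hsub j)
      have e4 : ∑ j, (Q i0 j - d j) * u i0 = (1 - δ) * u i0 := by
        rw [← Finset.sum_mul, e2]
      have := he i0
      nlinarith [e1, e2, e3, e4, hδ0]
    intro i
    obtain ⟨i0, -, hmax⟩ := Finset.exists_max_image Finset.univ v ⟨z0, Finset.mem_univ _⟩
    obtain ⟨i1, -, hmin⟩ := Finset.exists_min_image Finset.univ v ⟨z0, Finset.mem_univ _⟩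
    have hup : v i0 ≤ v z0 := main v hQv i0 (fun j => hmax j (Finset.mem_univ _))
    have hdown : v z0 ≤ v i1 := by
      have := main (fun j => -v j) (by
        funext i
        simp only [Matrix.mulVec, dotProduct]
        have : ∑ j, Q i j * (-v j) = -(∑ j, Q i j * v j) := by
          simp [Finset.sum_neg_distrib, mul_neg]
        rw [this]
        have : ∑ j, Q i j * v j = v i := by
          conv_rhs => rw [← hQv]
          simp [Matrix.mulVec, dotProduct]
        rw [this]) i1 (fun j => by simpa using hmin j (Finset.mem_univ _))
      simpa using this
    have h1 : v i ≤ v z0 := le_trans (hmax i (Finset.mem_univ _)) hup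
    have h2 : v z0 ≤ v i := le_trans hdown (hmin i (Finset.mem_univ _))
    linarith
  -- linear algebra
  classical
  let L : (Fin C → ℝ) →ₗ[ℝ] (Fin C → ℝ) := Matrix.mulVecLin (1 - P)
  have hLapp : ∀ v, L v = v - P.mulVec v := by
    intro v
    show (1 - P).mulVec v = _
    rw [Matrix.sub_mulVec, Matrix.one_mulVec]
  have hones : (fun _ => (1 : ℝ) : Fin C → ℝ) ≠ 0 := by
    intro h
    have := congrFun h z0
    simp at this
  have hkerL : LinearMap.ker L = Submodule.span ℝ {(fun _ => (1 : ℝ) : Fin C → ℝ)} := by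
    apply le_antisymm
    · intro v hv
      rw [LinearMap.mem_ker, hLapp] at hv
      have hPv : P.mulVec v = v := by
        have : v - P.mulVec v = 0 := hv
        funext i
        have := congrFun this i
        simp only [Pi.sub_apply, Pi.zero_apply] at this
        linarith
      have hconst := hker v hPv
      rw [Submodule.mem_span_singleton]
      exact ⟨v z0, by funext i; simp [hconst i]⟩
    · rw [Submodule.span_le]
      intro x hx
      simp only [Set.mem_singleton_iff] at hx
      subst hx
      simp only [SetLike.mem_coe, LinearMap.mem_ker, hLapp]
      funext i
      simp only [Matrix.mulVec, dotProduct, Pi.sub_apply, Pi.zero_apply, mul_one]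
      rw [hrow i]
      ring
  have hfr_kerL : Module.finrank ℝ (LinearMap.ker L) = 1 := by
    rw [hkerL]
    exact finrank_span_singleton hones
  let ℓ : (Fin C → ℝ) →ₗ[ℝ] ℝ :=
    { toFun := fun v => dotProduct π v
      map_add' := fun x y => by simp [dotProduct, mul_add, Finset.sum_add_distrib]
      map_smul' := fun c x => by
        simp [dotProduct, Finset.mul_sum, mul_left_comm] }
  have hℓapp : ∀ v, ℓ v = dotProduct π v := fun v => rfl
  have hrangeL : LinearMap.range L ≤ LinearMap.ker ℓ := by
    rintro x ⟨v, rfl⟩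
    rw [LinearMap.mem_ker, hℓapp]
    show dotProduct π ((1 - P).mulVec v) = 0
    rw [Matrix.dotProduct_mulVec, Matrix.vecMul_sub, Matrix.vecMul_one, hπP, sub_self,
      zero_dotProduct]
  have hsurj : Function.Surjective ℓ := by
    intro c
    refine ⟨c • (fun _ => (1 : ℝ)), ?_⟩
    show dotProduct π (c • fun _ => (1 : ℝ)) = c
    simp only [dotProduct, Pi.smul_apply, smul_eq_mul, mul_one]
    rw [← Finset.sum_mul, hπ1, one_mul]
  have hfr1 : Module.finrank ℝ (LinearMap.range L) + 1 = C := by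
    have := LinearMap.finrank_range_add_finrank_ker L
    rw [hfr_kerL] at this
    simpa [Module.finrank_pi] using this
  have hfr2 : 1 + Module.finrank ℝ (LinearMap.ker ℓ) = C := by
    have := LinearMap.finrank_range_add_finrank_ker ℓ
    rw [LinearMap.range_eq_top.mpr hsurj] at this
    simpa [Module.finrank_pi] using this
  have heq : LinearMap.range L = LinearMap.ker ℓ := by
    apply Submodule.eq_of_le_of_finrank_le hrangeL
    omega
  have hgmem : g ∈ LinearMap.range L := by
    rw [heq, LinearMap.mem_ker, hℓapp]
    exact hg
  obtain ⟨f, hf⟩ := hgmem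
  refine ⟨f, fun i => ?_⟩
  have := congrFun (hf.symm.trans (hLapp f)) i
  simpa [Matrix.mulVec, dotProduct] using this
set_option maxHeartbeats 2000000 in
/-- strong law of large numbers for the storage volume in the finite-capacity
case: the time averages of the storage level converge almost surely to the stationary mean
`μ_z = ∑ i, i · π i`, for any distribution of the initial level. -/
theorem stmt4
    {Ω : Type} [MeasurableSpace Ω] (μ : Measure Ω) [IsProbabilityMeasure μ]
    (C : ℕ) (hC : 2 ≤ C) (p : ℕ → ℝ) (hpnn : ∀ j, 0 ≤ p j) (hpsum : HasSum p 1)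
    (Y Z : ℕ → Ω → ℕ)
    (hYmeas : ∀ n, Measurable (Y n)) (hZ0meas : Measurable (Z 0))
    (hYdist : ∀ n j, (μ {ω | Y n ω = j}).toReal = p j)
    (hIndep : iIndepFun
      (fun i : Option ℕ => i.elim (Z 0) Y) μ)
    (hZ0lt : ∀ ω, Z 0 ω < C)
    (hrec : ∀ n ω, Z (n + 1) ω = min (Z n ω + Y n ω - 1) (C - 1))
    (hp0 : 0 < p 0) (hp01 : p 0 + p 1 < 1)
    (π : Fin C → ℝ) (hπnn : ∀ i, 0 ≤ π i) (hπ1 : ∑ i, π i = 1)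
    (hπP : Matrix.vecMul π (moranP C p) = π) :
    ∀ᵐ ω ∂μ, Tendsto
      (fun n => (∑ k ∈ Finset.range (n + 1), (Z k ω : ℝ)) / (n + 1))
      atTop (nhds (∑ i : Fin C, (i : ℝ) * π i)) := by
  classical
  set μz : ℝ := ∑ i : Fin C, (i : ℝ) * π i with hμz
  set P : Matrix (Fin C) (Fin C) ℝ := moranP C p with hP
  -- basic facts about the matrix
  have hlaw : ∀ (n : ℕ) (i j : Fin C),
      (μ {ω | min ((i : ℕ) + Y n ω - 1) (C - 1) = (j : ℕ)}).toReal = P i j := by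
    intro n i j
    have h := law_phi μ hC p (Y n) (hYmeas n) (hYdist n) i j i.isLt j.isLt
    simpa using h
  have hminmeas : ∀ (z n : ℕ), Measurable (fun ω => min (z + Y n ω - 1) (C - 1)) :=
    fun z n => (Measurable.of_discrete (f := fun y : ℕ => min (z + y - 1) (C - 1))).comp (hYmeas n)
  have hnn : ∀ i j : Fin C, 0 ≤ P i j := by
    intro i j
    rw [← hlaw 0 i j]
    exact ENNReal.toReal_nonneg
  have hrow : ∀ i : Fin C, ∑ j, P i j = 1 := by
    intro i
    rw [Finset.sum_congr rfl fun j _ => (hlaw 0 i j).symm]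
    have hdisj : Pairwise (Function.onFun Disjoint fun j : Fin C =>
        {ω | min ((i : ℕ) + Y 0 ω - 1) (C - 1) = (j : ℕ)}) := by
      intro a b hab
      simp only [Function.onFun, Set.disjoint_left, Set.mem_setOf_eq]
      intro ω h1 h2
      exact hab (Fin.ext (by omega))
    have hms : ∀ j : Fin C, MeasurableSet {ω | min ((i : ℕ) + Y 0 ω - 1) (C - 1) = (j : ℕ)} :=
      fun j => hminmeas (i : ℕ) 0 (measurableSet_singleton _)
    have hun : (⋃ j : Fin C, {ω | min ((i : ℕ) + Y 0 ω - 1) (C - 1) = (j : ℕ)}) = Set.univ := by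
      ext ω
      simp only [Set.mem_iUnion, Set.mem_setOf_eq, Set.mem_univ, iff_true]
      exact ⟨⟨min ((i : ℕ) + Y 0 ω - 1) (C - 1), by omega⟩, rfl⟩
    have h1 := measure_iUnion (μ := μ) hdisj hms
    rw [hun, measure_univ, tsum_fintype] at h1
    rw [← ENNReal.toReal_sum (fun j _ => measure_ne_top μ _), ← h1]
    simp
  -- Doeblin minorization at state i-1
  have hεle : ∀ i : Fin C, p 0 ≤ P i ⟨(i : ℕ) - 1, by have := i.isLt; omega⟩ := by
    intro i
    have hi := i.isLt
    show p 0 ≤ moranP C p i ⟨(i : ℕ) - 1, _⟩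
    simp only [moranP, Matrix.of_apply]
    split_ifs with h1 h2 h3
    · exact absurd h1 (by omega)
    · linarith [hpnn 1]
    · rw [show (i : ℕ) - 1 + 1 - (i : ℕ) = 0 by omega]
    · exact absurd (by omega) h3
  -- Poisson equation
  have hg : dotProduct π (fun i : Fin C => (i : ℝ) - μz) = 0 := by
    simp only [dotProduct, mul_sub, Finset.sum_sub_distrib]
    have h1 : ∑ i : Fin C, π i * (i : ℝ) = μz := by
      rw [hμz]
      exact Finset.sum_congr rfl fun i _ => mul_comm _ _
    have h2 : ∑ i : Fin C, π i * μz = μz := by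
      rw [← Finset.sum_mul, hπ1, one_mul]
    rw [h1, h2, sub_self]
  obtain ⟨f, hf⟩ := poisson_exists hC P hnn hrow hp0 hεle π hπ1 hπP
    (fun i : Fin C => (i : ℝ) - μz) hg
  -- notation
  set F : ℕ → ℝ := Ffun C f with hFdef
  set PF : ℕ → ℝ := PFfun C P f with hPFdef
  have hPoisson : ∀ m, m < C → (m : ℝ) - μz = F m - PF m := by
    intro m hm
    have := hf ⟨m, hm⟩
    simpa [hFdef, hPFdef, Ffun, PFfun, hm] using this
  -- facts about Z
  have hZlt : ∀ n ω, Z n ω < C := by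
    intro n
    induction n with
    | zero => exact hZ0lt
    | succ n ih => intro ω; rw [hrec]; omega
  have hZchain : ∀ n ω, Z n ω = mchain C (Z 0 ω) (fun j => Y j ω) n := by
    intro n
    induction n with
    | zero => intro ω; rfl
    | succ n ih => intro ω; rw [hrec, ih ω]; rfl
  have hZmeas : ∀ n, Measurable (Z n) := by
    intro n
    induction n with
    | zero => exact hZ0meas
    | succ n ih =>
      have : Z (n + 1) = fun ω => min (Z n ω + Y n ω - 1) (C - 1) := funext (hrec n)
      rw [this]
      exact (Measurable.of_discrete (f := fun q : ℕ × ℕ => min (q.1 + q.2 - 1) (C - 1))).comp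
        (ih.prodMk (hYmeas n))
  -- bounds
  set Bf : ℝ := ∑ i : Fin C, |f i| with hBf
  have hBf0 : 0 ≤ Bf := Finset.sum_nonneg fun i _ => abs_nonneg _
  have hFle : ∀ m, |F m| ≤ Bf := by
    intro m
    rw [hFdef]
    unfold Ffun
    by_cases h : m < C
    · rw [dif_pos h]
      exact Finset.single_le_sum (f := fun i : Fin C => |f i|) (fun i _ => abs_nonneg _)
        (Finset.mem_univ (⟨m, h⟩ : Fin C))
    · rw [dif_neg h]; simpa using hBf0
  have hPle1 : ∀ i j : Fin C, P i j ≤ 1 := by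
    intro i j
    rw [← hrow i]
    exact Finset.single_le_sum (fun k _ => hnn i k) (Finset.mem_univ j)
  have hPFle : ∀ m, |PF m| ≤ Bf := by
    intro m
    rw [hPFdef]
    unfold PFfun
    by_cases h : m < C
    · rw [dif_pos h]
      calc |∑ j, P ⟨m, h⟩ j * f j| ≤ ∑ j, |P ⟨m, h⟩ j * f j| := Finset.abs_sum_le_sum_abs _ _
        _ ≤ ∑ j : Fin C, |f j| := by
            refine Finset.sum_le_sum fun j _ => ?_
            rw [abs_mul, abs_of_nonneg (hnn _ j)]
            calc P ⟨m, h⟩ j * |f j| ≤ 1 * |f j| :=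
              mul_le_mul_of_nonneg_right (hPle1 _ j) (abs_nonneg _)
              _ = |f j| := one_mul _
    · rw [dif_neg h]; simpa using hBf0
  -- martingale differences
  set D : ℕ → Ω → ℝ := fun k ω => F (Z (k + 1) ω) - PF (Z k ω) with hD
  set M : ℕ → Ω → ℝ := fun n ω => ∑ k ∈ Finset.range n, D k ω with hM
  set B : ℝ := 2 * Bf with hB
  have hB0 : 0 ≤ B := by positivity
  have hDle : ∀ k ω, |D k ω| ≤ B := by
    intro k ω
    rw [hD, hB]
    calc |F (Z (k + 1) ω) - PF (Z k ω)| ≤ |F (Z (k + 1) ω)| + |PF (Z k ω)| := abs_sub _ _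
      _ ≤ Bf + Bf := add_le_add (hFle _) (hPFle _)
      _ = 2 * Bf := by ring
  have hMle : ∀ n ω, |M n ω| ≤ B * n := by
    intro n ω
    rw [hM]
    calc |∑ k ∈ Finset.range n, D k ω| ≤ ∑ k ∈ Finset.range n, |D k ω| :=
        Finset.abs_sum_le_sum_abs _ _
      _ ≤ ∑ _k ∈ Finset.range n, B := Finset.sum_le_sum fun k _ => hDle k ω
      _ = B * n := by simp [mul_comm]
  have hDmeas : ∀ k, Measurable (D k) := by
    intro k
    exact ((Measurable.of_discrete (f := F)).comp (hZmeas (k + 1))).sub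
      ((Measurable.of_discrete (f := PF)).comp (hZmeas k))
  have hMmeas : ∀ n, Measurable (M n) := by
    intro n
    exact Finset.measurable_sum _ fun k _ => hDmeas k
  have intg : ∀ (X : Ω → ℝ) (c : ℝ), Measurable X → (∀ ω, |X ω| ≤ c) → Integrable X μ := by
    intro X c hX hc
    exact (integrable_const c).mono' hX.aestronglyMeasurable
      (ae_of_all _ fun ω => by simpa [Real.norm_eq_abs] using hc ω)
  -- telescoping identity
  have htel : ∀ n ω, ∑ k ∈ Finset.range (n + 1), ((Z k ω : ℝ) - μz)
      = F (Z 0 ω) - F (Z (n + 1) ω) + M (n + 1) ω := by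
    intro n ω
    induction n with
    | zero =>
      have h0 := hPoisson (Z 0 ω) (hZlt 0 ω)
      simp only [Finset.sum_range_succ, Finset.sum_range_zero, zero_add, hM, hD,
        Finset.sum_range_one]
      linarith
    | succ n ih =>
      rw [Finset.sum_range_succ, ih]
      have hstep := hPoisson (Z (n + 1) ω) (hZlt (n + 1) ω)
      have hMs : M (n + 2) ω = M (n + 1) ω + D (n + 1) ω := by
        rw [hM]; exact Finset.sum_range_succ _ _
      have hDs : D (n + 1) ω = F (Z (n + 2) ω) - PF (Z (n + 1) ω) := rfl
      rw [hMs, hDs]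
      linarith
    -- inner averaging lemma
  have hzero : ∀ z : Fin C, ∑ w : Fin C, (F (w : ℕ) - PF (z : ℕ)) * P z w = 0 := by
    intro z
    have hF : ∀ w : Fin C, F (w : ℕ) = f w := by
      intro w
      rw [hFdef]; unfold Ffun; exact (dif_pos w.isLt).trans rfl
    have hPFz : PF (z : ℕ) = ∑ j, P z j * f j := by
      rw [hPFdef]; unfold PFfun; exact (dif_pos z.isLt).trans rfl
    simp only [hF, hPFz, sub_mul, Finset.sum_sub_distrib]
    rw [← Finset.mul_sum, hrow z, mul_one]
    rw [Finset.sum_congr rfl fun w _ => mul_comm (f w) (P z w), sub_self]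
  -- orthogonality of martingale differences to path functionals
  have horto : ∀ (n : ℕ) (H : (Fin (n + 1) → ℕ) → ℝ),
      ∫ ω, H (fun k => Z (k : ℕ) ω) * D n ω ∂μ = 0 := by
    intro n H
    set zn : Fin (n + 1) := ⟨n, by omega⟩ with hzn
    set c2 : (Fin (n + 1) → Fin C) → Fin C → ℝ :=
      fun v w => H (fun k => (v k : ℕ)) * (F (w : ℕ) - PF (v zn : ℕ)) with hc2
    set E2 : (Fin (n + 1) → Fin C) → Fin C → Set Ω :=
      fun v w => {ω | (∀ k : Fin (n + 1), Z (k : ℕ) ω = (v k : ℕ)) ∧ Z (n + 1) ω = (w : ℕ)}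
      with hE2
    have hE2meas : ∀ v w, MeasurableSet (E2 v w) := by
      intro v w
      have he : E2 v w = (⋂ k : Fin (n + 1), {ω | Z (k : ℕ) ω = (v k : ℕ)})
          ∩ {ω | Z (n + 1) ω = (w : ℕ)} := by
        ext ω; simp [hE2, Set.mem_iInter]
      rw [he]
      exact (MeasurableSet.iInter fun k => (hZmeas _) (measurableSet_singleton _)).inter
        ((hZmeas _) (measurableSet_singleton _))
    have hpt : ∀ ω, H (fun k => Z (k : ℕ) ω) * D n ω
        = ∑ q : (Fin (n + 1) → Fin C) × Fin C,
            Set.indicator (E2 q.1 q.2) (fun _ => c2 q.1 q.2) ω := by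
      intro ω
      rw [Finset.sum_eq_single
        (((fun k : Fin (n + 1) => (⟨Z (k : ℕ) ω, hZlt _ ω⟩ : Fin C)),
          (⟨Z (n + 1) ω, hZlt _ ω⟩ : Fin C)) : (Fin (n + 1) → Fin C) × Fin C)]
      · rw [Set.indicator_of_mem]
        exact ⟨fun k => rfl, rfl⟩
      · intro q _ hq
        rw [Set.indicator_of_notMem]
        rintro ⟨h1, h2⟩
        apply hq
        apply Prod.ext
        · funext k; exact Fin.ext (h1 k).symm
        · exact Fin.ext h2.symm
      · intro h; exact absurd (Finset.mem_univ _) h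
    have hint : ∫ ω, H (fun k => Z (k : ℕ) ω) * D n ω ∂μ
        = ∑ q : (Fin (n + 1) → Fin C) × Fin C, c2 q.1 q.2 * (μ (E2 q.1 q.2)).toReal := by
      rw [integral_congr_ae (ae_of_all _ hpt), integral_finset_sum _
        (fun q _ => (integrable_const (c2 q.1 q.2)).indicator (hE2meas q.1 q.2))]
      refine Finset.sum_congr rfl fun q _ => ?_
      rw [integral_indicator_const _ (hE2meas q.1 q.2), smul_eq_mul, mul_comm]
      rfl
    set S : Finset (Option ℕ) := insert none ((Finset.range n).image some) with hS
    have hnoneS : none ∈ S := by simp [hS]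
    have hmemS : ∀ j, j < n → some j ∈ S := by
      intro j hj
      simp [hS]
      omega
    set bun : Ω → ((i : S) → ℕ) := fun ω i => Option.elim (i : Option ℕ) (Z 0) Y ω with hbun
    have hindY : IndepFun bun (Y n) μ := by
      have hd : Disjoint S ({some n} : Finset (Option ℕ)) := by
        rw [Finset.disjoint_singleton_right]
        simp [hS]
      have h1 := hIndep.indepFun_finset S {some n} hd (fun i => by
        cases i with
        | none => exact hZ0meas
        | some m => exact hYmeas m)
      have h2 := h1.comp measurable_id
        (measurable_pi_apply
          (⟨some n, Finset.mem_singleton_self _⟩ : ({some n} : Finset (Option ℕ))))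
      exact h2
    have hfac : ∀ (s : Set ((i : S) → ℕ)) (t : Set ℕ),
        μ (bun ⁻¹' s ∩ Y n ⁻¹' t) = μ (bun ⁻¹' s) * μ (Y n ⁻¹' t) :=
      fun s t => (indepFun_iff_measure_inter_preimage_eq_mul.mp hindY) s t
        .of_discrete .of_discrete
    set sv : (Fin (n + 1) → Fin C) → Set ((i : S) → ℕ) := fun v =>
      {u | ∀ k : Fin (n + 1), mchain C (u ⟨none, hnoneS⟩)
        (fun j => if h : some j ∈ S then u ⟨some j, h⟩ else 0) (k : ℕ) = (v k : ℕ)} with hsv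
    have hAv : ∀ v : Fin (n + 1) → Fin C,
        {ω | ∀ k : Fin (n + 1), Z (k : ℕ) ω = (v k : ℕ)} = bun ⁻¹' (sv v) := by
      intro v
      ext ω
      simp only [Set.mem_setOf_eq, Set.mem_preimage, hsv]
      have hch : ∀ k : Fin (n + 1), mchain C (bun ω ⟨none, hnoneS⟩)
          (fun j => if h : some j ∈ S then bun ω ⟨some j, h⟩ else 0) (k : ℕ) = Z (k : ℕ) ω := by
        intro k
        have h1 : bun ω ⟨none, hnoneS⟩ = Z 0 ω := rfl
        rw [h1, hZchain (k : ℕ) ω]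
        apply mchain_congr
        intro j hj
        have hjS : some j ∈ S := hmemS j (by have := k.isLt; omega)
        rw [dif_pos hjS]
        rfl
      exact forall_congr' fun k => by rw [hch k]
    have hsplitE : ∀ (v : Fin (n + 1) → Fin C) (w : Fin C),
        E2 v w = (bun ⁻¹' (sv v)) ∩
          (Y n ⁻¹' {y | min ((v zn : ℕ) + y - 1) (C - 1) = (w : ℕ)}) := by
      intro v w
      rw [← hAv]
      ext ω
      simp only [hE2, Set.mem_setOf_eq, Set.mem_inter_iff, Set.mem_preimage]
      constructor
      · rintro ⟨h1, h2⟩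
        refine ⟨h1, ?_⟩
        have hzn1 : Z n ω = (v zn : ℕ) := h1 zn
        show min ((v zn : ℕ) + Y n ω - 1) (C - 1) = (w : ℕ)
        rw [← hzn1, ← hrec n ω]
        exact h2
      · rintro ⟨h1, h2⟩
        refine ⟨h1, ?_⟩
        have hzn1 : Z n ω = (v zn : ℕ) := h1 zn
        rw [hrec n ω, hzn1]
        exact h2
    have hmeasE2 : ∀ (v : Fin (n + 1) → Fin C) (w : Fin C), (μ (E2 v w)).toReal
        = (μ (bun ⁻¹' (sv v))).toReal * P (v zn) w := by
      intro v w
      rw [hsplitE v w, hfac, ENNReal.toReal_mul]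
      congr 1
      have h2 : Y n ⁻¹' {y | min ((v zn : ℕ) + y - 1) (C - 1) = (w : ℕ)}
          = {ω | min ((v zn : ℕ) + Y n ω - 1) (C - 1) = (w : ℕ)} := rfl
      rw [h2]
      exact hlaw n (v zn) w
    rw [hint, Fintype.sum_prod_type]
    apply Finset.sum_eq_zero
    intro v _
    have hterm : ∀ w : Fin C, c2 v w * (μ (E2 v w)).toReal
        = (H (fun k => (v k : ℕ)) * (μ (bun ⁻¹' (sv v))).toReal)
          * ((F (w : ℕ) - PF (v zn : ℕ)) * P (v zn) w) := by
      intro w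
      rw [hmeasE2 v w]
      simp only [hc2]
      ring
    rw [Finset.sum_congr rfl fun w _ => hterm w, ← Finset.mul_sum, hzero (v zn), mul_zero]
    -- path-functional representation of M n
  have hMrep : ∀ n : ℕ, ∃ Hm : (Fin (n + 1) → ℕ) → ℝ,
      ∀ ω, M n ω = Hm (fun k => Z (k : ℕ) ω) := by
    intro n
    refine ⟨fun u => ∑ k : Fin n, (F (u ⟨(k : ℕ) + 1, Nat.succ_lt_succ k.isLt⟩)
      - PF (u ⟨(k : ℕ), Nat.lt_succ_of_lt k.isLt⟩)), fun ω => ?_⟩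
    show (∑ k ∈ Finset.range n, D k ω) = _
    rw [Finset.sum_range fun k => D k ω]
  -- second moments
  have hEM2 : ∀ n : ℕ, ∫ ω, (M n ω) ^ 2 ∂μ ≤ B ^ 2 * n := by
    intro n
    induction n with
    | zero => simp [hM]
    | succ n ih =>
      obtain ⟨Hm, hHm⟩ := hMrep n
      have hMD : ∫ ω, M n ω * D n ω ∂μ = 0 := by
        have he : (fun ω => M n ω * D n ω)
            = fun ω => Hm (fun k => Z (k : ℕ) ω) * D n ω := by
          funext ω; rw [hHm ω]
        rw [he]
        exact horto n Hm
      have hsq : ∀ ω, (M (n + 1) ω) ^ 2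
          = (M n ω) ^ 2 + (2 * (M n ω * D n ω) + (D n ω) ^ 2) := by
        intro ω
        rw [show M (n + 1) ω = M n ω + D n ω from Finset.sum_range_succ _ _]
        ring
      have hIM2 : Integrable (fun ω => (M n ω) ^ 2) μ :=
        intg _ ((B * n) ^ 2) ((hMmeas n).pow_const 2) (fun ω => by
          rw [abs_pow]; exact pow_le_pow_left₀ (abs_nonneg _) (hMle n ω) 2)
      have hIMD : Integrable (fun ω => M n ω * D n ω) μ :=
        intg _ ((B * n) * B) ((hMmeas n).mul (hDmeas n)) (fun ω => by
          rw [abs_mul]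
          exact mul_le_mul (hMle n ω) (hDle n ω) (abs_nonneg _) (by positivity))
      have hID2 : Integrable (fun ω => (D n ω) ^ 2) μ :=
        intg _ (B ^ 2) ((hDmeas n).pow_const 2) (fun ω => by
          rw [abs_pow]; exact pow_le_pow_left₀ (abs_nonneg _) (hDle n ω) 2)
      rw [integral_congr_ae (ae_of_all _ hsq),
        integral_add (f := fun ω => (M n ω) ^ 2)
          (g := fun ω => 2 * (M n ω * D n ω) + (D n ω) ^ 2) hIM2 ((hIMD.const_mul 2).add hID2),
        integral_add (f := fun ω => 2 * (M n ω * D n ω)) (g := fun ω => (D n ω) ^ 2)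
          (hIMD.const_mul 2) hID2, integral_const_mul, hMD, mul_zero]
      have hD2 : ∫ ω, (D n ω) ^ 2 ∂μ ≤ B ^ 2 := by
        have h1 : ∫ ω, (D n ω) ^ 2 ∂μ ≤ ∫ _ω, B ^ 2 ∂μ := by
          refine integral_mono hID2 (integrable_const _) fun ω => ?_
          have h := abs_le.mp (hDle n ω)
          nlinarith [h.1, h.2]
        simpa using h1
      push_cast
      nlinarith [hD2, ih]
  -- fourth moments
  have hEM4 : ∀ n : ℕ, ∫ ω, (M n ω) ^ 4 ∂μ ≤ 11 * B ^ 4 * n ^ 2 := by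
    intro n
    induction n with
    | zero => simp [hM]
    | succ n ih =>
      obtain ⟨Hm, hHm⟩ := hMrep n
      have hM3D : ∫ ω, (M n ω) ^ 3 * D n ω ∂μ = 0 := by
        have he : (fun ω => (M n ω) ^ 3 * D n ω)
            = fun ω => (fun u => (Hm u) ^ 3) (fun k => Z (k : ℕ) ω) * D n ω := by
          funext ω; simp only; rw [hHm ω]
        rw [he]
        exact horto n fun u => (Hm u) ^ 3
      have hexp : ∀ ω, (M (n + 1) ω) ^ 4 = (M n ω) ^ 4 +
          (4 * ((M n ω) ^ 3 * D n ω) + (6 * ((M n ω) ^ 2 * (D n ω) ^ 2)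
            + (4 * (M n ω * (D n ω) ^ 3) + (D n ω) ^ 4))) := by
        intro ω
        rw [show M (n + 1) ω = M n ω + D n ω from Finset.sum_range_succ _ _]
        ring
      have hIM2 : Integrable (fun ω => (M n ω) ^ 2) μ :=
        intg _ ((B * n) ^ 2) ((hMmeas n).pow_const 2) (fun ω => by
          rw [abs_pow]; exact pow_le_pow_left₀ (abs_nonneg _) (hMle n ω) 2)
      have hIa : Integrable (fun ω => (M n ω) ^ 4) μ :=
        intg _ ((B * n) ^ 4) ((hMmeas n).pow_const 4) (fun ω => by
          rw [abs_pow]; exact pow_le_pow_left₀ (abs_nonneg _) (hMle n ω) 4)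
      have hIb : Integrable (fun ω => (M n ω) ^ 3 * D n ω) μ :=
        intg _ ((B * n) ^ 3 * B) (((hMmeas n).pow_const 3).mul (hDmeas n)) (fun ω => by
          rw [abs_mul, abs_pow]
          exact mul_le_mul (pow_le_pow_left₀ (abs_nonneg _) (hMle n ω) 3) (hDle n ω)
            (abs_nonneg _) (by positivity))
      have hIc : Integrable (fun ω => (M n ω) ^ 2 * (D n ω) ^ 2) μ :=
        intg _ ((B * n) ^ 2 * B ^ 2) (((hMmeas n).pow_const 2).mul ((hDmeas n).pow_const 2))
          (fun ω => by
            rw [abs_mul, abs_pow, abs_pow]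
            exact mul_le_mul (pow_le_pow_left₀ (abs_nonneg _) (hMle n ω) 2)
              (pow_le_pow_left₀ (abs_nonneg _) (hDle n ω) 2)
              (pow_nonneg (abs_nonneg _) 2) (by positivity))
      have hId : Integrable (fun ω => M n ω * (D n ω) ^ 3) μ :=
        intg _ ((B * n) * B ^ 3) ((hMmeas n).mul ((hDmeas n).pow_const 3)) (fun ω => by
          rw [abs_mul, abs_pow]
          exact mul_le_mul (hMle n ω) (pow_le_pow_left₀ (abs_nonneg _) (hDle n ω) 3)
            (pow_nonneg (abs_nonneg _) 3) (by positivity))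
      have hIe : Integrable (fun ω => (D n ω) ^ 4) μ :=
        intg _ (B ^ 4) ((hDmeas n).pow_const 4) (fun ω => by
          rw [abs_pow]; exact pow_le_pow_left₀ (abs_nonneg _) (hDle n ω) 4)
      rw [integral_congr_ae (ae_of_all _ hexp),
        integral_add (f := fun ω => (M n ω) ^ 4)
          (g := fun ω => 4 * ((M n ω) ^ 3 * D n ω) + (6 * ((M n ω) ^ 2 * (D n ω) ^ 2)
            + (4 * (M n ω * (D n ω) ^ 3) + (D n ω) ^ 4)))
          hIa ((hIb.const_mul 4).add ((hIc.const_mul 6).add ((hId.const_mul 4).add hIe))),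
        integral_add (f := fun ω => 4 * ((M n ω) ^ 3 * D n ω))
          (g := fun ω => 6 * ((M n ω) ^ 2 * (D n ω) ^ 2)
            + (4 * (M n ω * (D n ω) ^ 3) + (D n ω) ^ 4))
          (hIb.const_mul 4) ((hIc.const_mul 6).add ((hId.const_mul 4).add hIe)),
        integral_add (f := fun ω => 6 * ((M n ω) ^ 2 * (D n ω) ^ 2))
          (g := fun ω => 4 * (M n ω * (D n ω) ^ 3) + (D n ω) ^ 4)
          (hIc.const_mul 6) ((hId.const_mul 4).add hIe),
        integral_add (f := fun ω => 4 * (M n ω * (D n ω) ^ 3)) (g := fun ω => (D n ω) ^ 4)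
          (hId.const_mul 4) hIe,
        integral_const_mul, integral_const_mul, integral_const_mul, hM3D, mul_zero]
      have hc : ∫ ω, (M n ω) ^ 2 * (D n ω) ^ 2 ∂μ ≤ (B ^ 2 * n) * B ^ 2 := by
        have h1 : ∫ ω, (M n ω) ^ 2 * (D n ω) ^ 2 ∂μ ≤ ∫ ω, (M n ω) ^ 2 * B ^ 2 ∂μ := by
          refine integral_mono hIc (hIM2.mul_const _) fun ω => ?_
          have h := abs_le.mp (hDle n ω)
          have hD2 : (D n ω) ^ 2 ≤ B ^ 2 := by nlinarith [h.1, h.2]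
          exact mul_le_mul_of_nonneg_left hD2 (sq_nonneg _)
        rw [integral_mul_const] at h1
        exact h1.trans (mul_le_mul_of_nonneg_right (hEM2 n) (by positivity))
      have hd : ∫ ω, M n ω * (D n ω) ^ 3 ∂μ ≤ (B * n) * B ^ 3 := by
        have h1 : ∫ ω, M n ω * (D n ω) ^ 3 ∂μ ≤ ∫ _ω, (B * n) * B ^ 3 ∂μ := by
          refine integral_mono hId (integrable_const _) fun ω => ?_
          calc M n ω * (D n ω) ^ 3 ≤ |M n ω * (D n ω) ^ 3| := le_abs_self _
            _ = |M n ω| * |D n ω| ^ 3 := by rw [abs_mul, abs_pow]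
            _ ≤ (B * n) * B ^ 3 :=
              mul_le_mul (hMle n ω) (pow_le_pow_left₀ (abs_nonneg _) (hDle n ω) 3)
                (pow_nonneg (abs_nonneg _) 3) (by positivity)
        simpa using h1
      have hee : ∫ ω, (D n ω) ^ 4 ∂μ ≤ B ^ 4 := by
        have h1 : ∫ ω, (D n ω) ^ 4 ∂μ ≤ ∫ _ω, B ^ 4 ∂μ := by
          refine integral_mono hIe (integrable_const _) fun ω => ?_
          have h2 : (D n ω) ^ 4 = |D n ω| ^ 4 := by
            rw [← abs_pow]; exact (abs_of_nonneg (by positivity)).symm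
          rw [h2]; exact pow_le_pow_left₀ (abs_nonneg _) (hDle n ω) 4
        simpa using h1
      push_cast
      nlinarith [hc, hd, hee, ih, mul_nonneg (pow_nonneg hB0 4) (Nat.cast_nonneg (α := ℝ) n),
        pow_nonneg hB0 4]
    -- Markov inequality for the fourth moment
  set K : ℝ := 11 * B ^ 4 with hK
  have hmark : ∀ m n : ℕ,
      μ {ω | ((n : ℝ) + 1) / ((m : ℝ) + 1) ≤ |M (n + 1) ω|}
        ≤ ENNReal.ofReal (K * ((m : ℝ) + 1) ^ 4 / ((n : ℝ) + 1) ^ 2) := by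
    intro m n
    set a : ℝ := ((n : ℝ) + 1) / ((m : ℝ) + 1) with ha
    have ha0 : 0 < a := by positivity
    have hIa : Integrable (fun ω => (M (n + 1) ω) ^ 4) μ :=
      intg _ ((B * (n + 1)) ^ 4) ((hMmeas (n + 1)).pow_const 4) (fun ω => by
        rw [abs_pow]
        refine pow_le_pow_left₀ (abs_nonneg _) ?_ 4
        have h := hMle (n + 1) ω
        push_cast at h ⊢
        linarith)
    have hsub : {ω | a ≤ |M (n + 1) ω|} ⊆ {ω | a ^ 4 ≤ (M (n + 1) ω) ^ 4} := by
      intro ω hω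
      simp only [Set.mem_setOf_eq] at hω ⊢
      calc a ^ 4 ≤ |M (n + 1) ω| ^ 4 := pow_le_pow_left₀ ha0.le hω 4
        _ = (M (n + 1) ω) ^ 4 := by
          rw [← abs_pow]; exact abs_of_nonneg (by positivity)
    have hmark1 := mul_meas_ge_le_integral_of_nonneg
      (ae_of_all μ (fun ω => by positivity : ∀ ω, 0 ≤ (M (n + 1) ω) ^ 4)) hIa (a ^ 4)
    have hEM := hEM4 (n + 1)
    have hEM' : ∫ ω, (M (n + 1) ω) ^ 4 ∂μ ≤ K * ((n : ℝ) + 1) ^ 2 := by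
      push_cast at hEM
      linarith
    have hmono : (μ {ω | a ≤ |M (n + 1) ω|}).toReal
        ≤ (μ {ω | a ^ 4 ≤ (M (n + 1) ω) ^ 4}).toReal :=
      ENNReal.toReal_mono (measure_ne_top μ _) (measure_mono hsub)
    have ha4 : (0 : ℝ) < a ^ 4 := by positivity
    have h2 : (μ {ω | a ≤ |M (n + 1) ω|}).toReal ≤ K * ((n : ℝ) + 1) ^ 2 / a ^ 4 := by
      rw [le_div_iff₀ ha4]
      have hm1 : a ^ 4 * (μ {x | a ^ 4 ≤ M (n + 1) x ^ 4}).toReal ≤ ∫ x, M (n + 1) x ^ 4 ∂μ := hmark1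
      nlinarith [hm1, hEM', hmono, mul_le_mul_of_nonneg_left hmono ha4.le]
    have haeq : K * ((n : ℝ) + 1) ^ 2 / a ^ 4 = K * ((m : ℝ) + 1) ^ 4 / ((n : ℝ) + 1) ^ 2 := by
      rw [ha]
      field_simp
    rw [← ENNReal.ofReal_toReal (measure_ne_top μ {ω | a ≤ |M (n + 1) ω|})]
    exact ENNReal.ofReal_le_ofReal (by rw [← haeq]; exact h2)
  -- Borel–Cantelli
  have hsum : ∀ m : ℕ,
      (∑' n : ℕ, μ {ω | ((n : ℝ) + 1) / ((m : ℝ) + 1) ≤ |M (n + 1) ω|}) ≠ ⊤ := by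
    intro m
    have hsummable : Summable (fun n : ℕ => K * ((m : ℝ) + 1) ^ 4 / ((n : ℝ) + 1) ^ 2) := by
      have h1 : Summable (fun n : ℕ => 1 / ((n : ℝ) + 1) ^ 2) := by
        have h2 := (summable_nat_add_iff 1).mpr (Real.summable_one_div_nat_pow.mpr one_lt_two)
        apply h2.congr
        intro n
        push_cast
        ring
      have h3 := h1.mul_left (K * ((m : ℝ) + 1) ^ 4)
      apply h3.congr
      intro n
      rw [mul_one_div]
    refine ne_top_of_le_ne_top ?_ (ENNReal.tsum_le_tsum fun n => hmark m n)
    rw [← ENNReal.ofReal_tsum_of_nonneg (fun n => by positivity) hsummable]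
    exact ENNReal.ofReal_ne_top
  have hae : ∀ᵐ ω ∂μ, ∀ m : ℕ, ∃ N : ℕ, ∀ n : ℕ, n ≥ N →
      ¬ ((n : ℝ) + 1) / ((m : ℝ) + 1) ≤ |M (n + 1) ω| := by
    rw [ae_all_iff]
    intro m
    have h1 := ae_finite_setOf_mem (hsum m)
    filter_upwards [h1] with ω hω
    obtain ⟨b, hb⟩ := hω.bddAbove
    refine ⟨b + 1, fun n hn hmem => ?_⟩
    have h2 : n ≤ b := hb hmem
    omega
  have hMtend : ∀ᵐ ω ∂μ, Tendsto (fun n : ℕ => M (n + 1) ω / ((n : ℝ) + 1)) atTop (nhds 0) := by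
    filter_upwards [hae] with ω hω
    rw [Metric.tendsto_atTop]
    intro ε hε
    obtain ⟨m, hm⟩ := exists_nat_one_div_lt hε
    obtain ⟨N, hN⟩ := hω m
    refine ⟨N, fun n hn => ?_⟩
    have h1 := hN n hn
    push_neg at h1
    rw [Real.dist_eq, sub_zero, abs_div, abs_of_pos (by positivity : (0:ℝ) < (n : ℝ) + 1)]
    rw [div_lt_iff₀ (by positivity : (0:ℝ) < (n : ℝ) + 1)]
    have h3 : ((n : ℝ) + 1) * (1 / ((m : ℝ) + 1)) < ((n : ℝ) + 1) * ε :=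
      mul_lt_mul_of_pos_left hm (by positivity)
    have h4 : ((n : ℝ) + 1) / ((m : ℝ) + 1) = ((n : ℝ) + 1) * (1 / ((m : ℝ) + 1)) := by ring
    nlinarith [h1, h3]
  -- conclusion
  filter_upwards [hMtend] with ω hω
  have heq : ∀ n : ℕ, (∑ k ∈ Finset.range (n + 1), (Z k ω : ℝ)) / ((n : ℝ) + 1)
      = μz + ((F (Z 0 ω) - F (Z (n + 1) ω)) / ((n : ℝ) + 1)
        + M (n + 1) ω / ((n : ℝ) + 1)) := by
    intro n
    have h1 := htel n ω
    rw [Finset.sum_sub_distrib] at h1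
    have h2 : ∑ _k ∈ Finset.range (n + 1), μz = ((n : ℝ) + 1) * μz := by
      rw [Finset.sum_const, Finset.card_range]
      push_cast
      ring
    rw [h2] at h1
    have h3 : ∑ k ∈ Finset.range (n + 1), (Z k ω : ℝ)
        = ((n : ℝ) + 1) * μz + (F (Z 0 ω) - F (Z (n + 1) ω) + M (n + 1) ω) := by
      linarith
    rw [h3]
    field_simp
  have hFtend : Tendsto (fun n : ℕ => (F (Z 0 ω) - F (Z (n + 1) ω)) / ((n : ℝ) + 1))
      atTop (nhds 0) := by
    have hdivtend : Tendsto (fun n : ℕ => (2 * Bf) / ((n : ℝ) + 1)) atTop (nhds 0) := by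
      have h1 := (tendsto_const_div_atTop_nhds_zero_nat (2 * Bf)).comp
        (tendsto_add_atTop_nat 1)
      apply h1.congr
      intro n
      simp only [Function.comp_apply]
      push_cast
      ring
    refine squeeze_zero_norm (fun n => ?_) hdivtend
    rw [Real.norm_eq_abs, abs_div, abs_of_pos (by positivity : (0:ℝ) < (n : ℝ) + 1)]
    have habs : |F (Z 0 ω) - F (Z (n + 1) ω)| ≤ 2 * Bf := by
      calc |F (Z 0 ω) - F (Z (n + 1) ω)| ≤ |F (Z 0 ω)| + |F (Z (n + 1) ω)| := abs_sub _ _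
        _ ≤ Bf + Bf := add_le_add (hFle _) (hFle _)
        _ = 2 * Bf := by ring
    exact (div_le_div_iff_of_pos_right (by positivity : (0:ℝ) < (n : ℝ) + 1)).mpr habs
  have hgoal : Tendsto (fun n : ℕ => μz + ((F (Z 0 ω) - F (Z (n + 1) ω)) / ((n : ℝ) + 1)
      + M (n + 1) ω / ((n : ℝ) + 1))) atTop (nhds (μz + (0 + 0))) :=
    Tendsto.const_add _ (hFtend.add hω)
  have hfin := hgoal.congr (fun n => (heq n).symm)
  simpa using hfin
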